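/- Exhaustion gluing for Bézout solutions: Let f = (f₁,...,f_N) be a tuple of entire functions on ℂⁿ. Suppose for each k ∈ ℕ there is an N-tuple a_k of functions holomorphic on a neighborhood of the closed polydisk D_{k+1} with a_k·fᵗ = 1 on D_{k+1}, and suppose moreover a_{k+1} - a_k = f·H_k on D_{k+1} for antisymmetric matrices H_k of functions holomorphic near D_{k+1}. If P_k are antisymmetric matrices of polynomials with sup_{D_{k+1}} ‖f·H_k - f·P_k‖ < 2^{-k}, then g := ∑_{k=0}^∞ (a_{k+1} - a_k - f·P_k) (with a_0 = 0) defines an N-tuple of entire functions satisfying g·fᵗ = 1 on ℂⁿ. -/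

import Mathlib

open scoped BigOperators
open Matrix

/-- The closed polydisk of radius `k` in ℂⁿ. -/
def closedPolydiskR (n : ℕ) (k : ℝ) : Set (Fin n → ℂ) := {z | ∀ j, ‖z j‖ ≤ k}

open Metric Set Filter
open scoped Topology

/-- Evaluation of a multivariate polynomial is entire. -/
lemma mvpoly_differentiable {n : ℕ} (p : MvPolynomial (Fin n) ℂ) :
    Differentiable ℂ (fun z : Fin n → ℂ => MvPolynomial.eval z p) := by
  induction p using MvPolynomial.induction_on with
  | C a => simpa using differentiable_const a
  | add p q hp hq => simpa [MvPolynomial.eval_add] using hp.fun_add hq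
  | mul_X p i hp =>
      simp only [MvPolynomial.eval_mul, MvPolynomial.eval_X]
      exact hp.mul ((ContinuousLinearMap.proj i : (Fin n → ℂ) →L[ℂ] ℂ).differentiable)

lemma antisym_double_sum_zero {N : ℕ} (c : Fin N → Fin N → ℂ)
    (hc : ∀ i j, c j i = -c i j) : ∑ j, ∑ i, c i j = 0 := by
  have h : ∑ j, ∑ i, c i j = -∑ j, ∑ i, c i j := by
    calc ∑ j, ∑ i, c i j = ∑ j, ∑ i, -(c j i) := by
          refine Finset.sum_congr rfl fun j _ => Finset.sum_congr rfl fun i _ => hc j i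
      _ = -∑ j, ∑ i, c j i := by simp
      _ = -∑ j, ∑ i, c i j := by rw [Finset.sum_comm]
  have h2 : (2 : ℂ) * (∑ j, ∑ i, c i j) = 0 := by
    rw [two_mul]; nth_rewrite 2 [h]; ring
  simpa using mul_eq_zero.mp h2

/-- Cauchy-type estimate: a function holomorphic on a neighborhood of the closed polydisk of
radius `k+1`, with norm `< B` there, has Fréchet derivative of norm at most `2B` at points
of the polydisk of radius `m ≤ k`. -/
lemma fderiv_bound_of_polydisk {n k m : ℕ} (hmk : m ≤ k) {F : (Fin n → ℂ) → ℂ}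
    {U : Set (Fin n → ℂ)} (hU : IsOpen U)
    (hsub : {z : Fin n → ℂ | ∀ i, ‖z i‖ ≤ (k : ℝ) + 1} ⊆ U)
    (hF : DifferentiableOn ℂ F U) {B : ℝ}
    (hB : ∀ z : Fin n → ℂ, (∀ i, ‖z i‖ ≤ (k : ℝ) + 1) → ‖F z‖ < B)
    {z : Fin n → ℂ} (hz : ∀ i, ‖z i‖ ≤ (m : ℝ)) :
    ‖fderiv ℂ F z‖ ≤ 2 * B := by
  have hzk : ∀ i, ‖z i‖ ≤ (k : ℝ) + 1 := fun i =>
    (hz i).trans (by exact_mod_cast le_trans (Nat.cast_le.mpr hmk) (by linarith))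
  have hBpos : 0 < B := lt_of_le_of_lt (norm_nonneg _) (hB z hzk)
  apply ContinuousLinearMap.opNorm_le_bound _ (by positivity)
  intro v
  rcases eq_or_ne v 0 with rfl | hv
  · simp
  have hvpos : 0 < ‖v‖ := norm_pos_iff.mpr hv
  set r : ℝ := 1 / ‖v‖ with hr
  have hrpos : 0 < r := by positivity
  have hmem : ∀ w : ℂ, ‖w‖ < r → ∀ i, ‖z i + w * v i‖ ≤ (k : ℝ) + 1 := by
    intro w hw i
    have h1 : ‖w * v i‖ ≤ ‖w‖ * ‖v‖ := by
      rw [norm_mul]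
      exact mul_le_mul_of_nonneg_left (norm_le_pi_norm v i) (norm_nonneg w)
    have h2 : ‖w‖ * ‖v‖ < 1 := by
      rw [hr] at hw
      calc ‖w‖ * ‖v‖ < (1 / ‖v‖) * ‖v‖ := by
            exact mul_lt_mul_of_pos_right hw hvpos
        _ = 1 := by field_simp
    calc ‖z i + w * v i‖ ≤ ‖z i‖ + ‖w * v i‖ := norm_add_le _ _
      _ ≤ (m : ℝ) + 1 := by nlinarith [hz i]
      _ ≤ (k : ℝ) + 1 := by have : (m:ℝ) ≤ k := Nat.cast_le.mpr hmk; linarith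
  set g : ℂ → ℂ := fun w => F (z + w • v) with hg
  have hline : ∀ w : ℂ, HasDerivAt (fun w : ℂ => z + w • v) v w := by
    intro w
    simpa using ((hasDerivAt_id w).smul_const v).const_add z
  have hdiffg : DifferentiableOn ℂ g (ball (0 : ℂ) r) := by
    intro w hw
    have hwmem : z + w • v ∈ U := by
      apply hsub
      intro i
      have := hmem w (by simpa using hw) i
      simpa using this
    exact ((hF.differentiableAt (hU.mem_nhds hwmem)).comp w
      (hline w).differentiableAt).differentiableWithinAt
  have hFz : HasFDerivAt F (fderiv ℂ F z) z := by
    apply DifferentiableAt.hasFDerivAt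
    exact hF.differentiableAt (hU.mem_nhds (hsub fun i => hzk i))
  have hgderiv : HasDerivAt g (fderiv ℂ F z v) 0 := by
    have hFz' : HasFDerivAt F (fderiv ℂ F z) (z + (0 : ℂ) • v) := by simpa using hFz
    have := hFz'.comp_hasDerivAt 0 (hline 0)
    exact this
  have hmaps : MapsTo g (ball (0:ℂ) r) (ball (g 0) (2 * B)) := by
    intro w hw
    have hgw : ‖g w‖ < B := hB _ (fun i => by simpa using hmem w (by simpa using hw) i)
    have hg0 : ‖g 0‖ < B := hB _ (fun i => by
      simpa using hmem 0 (by simpa using hrpos) i)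
    rw [mem_ball, dist_eq_norm]
    calc ‖g w - g 0‖ ≤ ‖g w‖ + ‖g 0‖ := norm_sub_le _ _
      _ < 2 * B := by linarith
  have := Complex.norm_deriv_le_div_of_mapsTo_ball hdiffg (hmaps.mono_right ball_subset_closedBall) hrpos
  rw [hgderiv.deriv] at this
  calc ‖fderiv ℂ F z v‖ ≤ 2 * B / r := this
    _ = 2 * B * ‖v‖ := by rw [hr]; field_simp

set_option maxHeartbeats 1000000 in
/-- Exhaustion gluing for Bézout solutions: given local Bézout solutions `a k` for the
entire tuple `f` on the closed polydisks `D (k+1)`, holomorphic on a neighborhood of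
`D (k+1)`, with consecutive differences `a (k+1) - a k = f·H k` for antisymmetric
matrices `H k` holomorphic near `D (k+1)` (with `a 0 = 0`, `H 0 = 0`), and antisymmetric
polynomial matrices `P k` with `sup_{D (k+1)} ‖f·H k - f·P k‖ < 2⁻ᵏ`, the sum
`g = ∑ k, (a (k+1) - a k - f·P k)` is an entire Bézout solution: `g·fᵗ = 1` on ℂⁿ. -/
theorem exhaustion_gluing_bezout (n N : ℕ)
    (f : Fin N → (Fin n → ℂ) → ℂ) (hf : ∀ j, Differentiable ℂ (f j))
    (a : ℕ → Fin N → (Fin n → ℂ) → ℂ) (ha0 : a 0 = 0)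
    (haHol : ∀ k : ℕ, 1 ≤ k → ∀ j, ∃ U : Set (Fin n → ℂ),
      IsOpen U ∧ closedPolydiskR n ((k : ℝ) + 1) ⊆ U ∧ DifferentiableOn ℂ (a k j) U)
    (haBez : ∀ k : ℕ, 1 ≤ k → ∀ z ∈ closedPolydiskR n ((k : ℝ) + 1),
      ∑ j, a k j z * f j z = 1)
    (H : ℕ → Matrix (Fin N) (Fin N) ((Fin n → ℂ) → ℂ)) (hH0 : H 0 = 0)
    (hHHol : ∀ k : ℕ, ∀ i j, ∃ U : Set (Fin n → ℂ),
      IsOpen U ∧ closedPolydiskR n ((k : ℝ) + 1) ⊆ U ∧ DifferentiableOn ℂ (H k i j) U)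
    (hHanti : ∀ k : ℕ, (H k)ᵀ = -H k)
    (hHrel : ∀ k : ℕ, 1 ≤ k → ∀ z ∈ closedPolydiskR n ((k : ℝ) + 1), ∀ j,
      a (k + 1) j z - a k j z = ∑ i, f i z * H k i j z)
    (P : ℕ → Matrix (Fin N) (Fin N) (MvPolynomial (Fin n) ℂ))
    (hPanti : ∀ k : ℕ, (P k)ᵀ = -P k)
    (hPapprox : ∀ k : ℕ, ∀ z ∈ closedPolydiskR n ((k : ℝ) + 1), ∀ j,
      ‖∑ i, f i z * H k i j z - ∑ i, f i z * MvPolynomial.eval z (P k i j)‖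
        < (2 : ℝ)⁻¹ ^ k) :
    ∃ g : Fin N → (Fin n → ℂ) → ℂ,
      (∀ j, Differentiable ℂ (g j)) ∧
      (∀ j, ∀ z : Fin n → ℂ, HasSum
        (fun k : ℕ => a (k + 1) j z - a k j z - ∑ i, f i z * MvPolynomial.eval z (P k i j))
        (g j z)) ∧
      ∀ z : Fin n → ℂ, ∑ j, g j z * f j z = 1 := by
  classical
  have hQdiff : ∀ (k : ℕ) (j : Fin N),
      Differentiable ℂ (fun z : Fin n → ℂ => ∑ i, f i z * MvPolynomial.eval z (P k i j)) :=
    fun k j => Differentiable.fun_sum fun i _ => (hf i).mul (mvpoly_differentiable _)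
  have hu_small : ∀ k : ℕ, 1 ≤ k → ∀ z ∈ closedPolydiskR n ((k : ℝ) + 1), ∀ j,
      ‖a (k + 1) j z - a k j z - ∑ i, f i z * MvPolynomial.eval z (P k i j)‖
        < (2 : ℝ)⁻¹ ^ k := by
    intro k hk z hz j
    rw [hHrel k hk z hz j]
    exact hPapprox k z hz j
  have hradius : ∀ z : Fin n → ℂ, ∃ m : ℕ, 1 ≤ m ∧ ∀ i, ‖z i‖ < (m : ℝ) := by
    intro z
    obtain ⟨m, hm⟩ := exists_nat_gt (max 1 (∑ i, ‖z i‖))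
    refine ⟨m, ?_, fun i => ?_⟩
    · have h1 : (1 : ℝ) < m := lt_of_le_of_lt (le_max_left _ _) hm
      exact_mod_cast Nat.one_le_cast.mp h1.le
    · have h1 : ‖z i‖ ≤ ∑ i, ‖z i‖ :=
        Finset.single_le_sum (fun i _ => norm_nonneg _) (Finset.mem_univ i)
      exact lt_of_le_of_lt (h1.trans (le_max_right _ _)) hm
  have hmem : ∀ (z : Fin n → ℂ) (m k : ℕ), (∀ i, ‖z i‖ ≤ (m : ℝ)) → m ≤ k →
      z ∈ closedPolydiskR n ((k : ℝ) + 1) := by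
    intro z m k hz hmk i
    have h1 : (m : ℝ) ≤ k := Nat.cast_le.mpr hmk
    exact (hz i).trans (by linarith)
  have hsummable : ∀ (j : Fin N) (z : Fin n → ℂ),
      Summable (fun k => a (k + 1) j z - a k j z
        - ∑ i, f i z * MvPolynomial.eval z (P k i j)) := by
    intro j z
    obtain ⟨m, hm1, hmz⟩ := hradius z
    apply Summable.of_norm_bounded_eventually_nat (g := fun k => (2 : ℝ)⁻¹ ^ k)
      (summable_geometric_of_lt_one (by norm_num) (by norm_num))
    filter_upwards [Filter.eventually_ge_atTop m] with k hk
    exact (hu_small k (hm1.trans hk) z (hmem z m k (fun i => (hmz i).le) hk) j).le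
  have htel : ∀ (M : ℕ) (j : Fin N) (z : Fin n → ℂ),
      (∑ k ∈ Finset.range M, (a (k + 1) j z - a k j z
          - ∑ i, f i z * MvPolynomial.eval z (P k i j)))
        = a M j z - ∑ k ∈ Finset.range M, ∑ i, f i z * MvPolynomial.eval z (P k i j) := by
    intro M j z
    rw [Finset.sum_sub_distrib, Finset.sum_range_sub (fun k => a k j z), ha0]
    simp
  refine ⟨fun j z => ∑' k, (a (k + 1) j z - a k j z
      - ∑ i, f i z * MvPolynomial.eval z (P k i j)), ?_, fun j z => (hsummable j z).hasSum, ?_⟩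
  · -- differentiability
    intro j z₀
    obtain ⟨m, hm1, hmz⟩ := hradius z₀
    have hdecomp : (fun z : Fin n → ℂ => ∑' k, (a (k + 1) j z - a k j z
          - ∑ i, f i z * MvPolynomial.eval z (P k i j)))
        = fun z : Fin n → ℂ =>
          (a m j z - ∑ k ∈ Finset.range m, ∑ i, f i z * MvPolynomial.eval z (P k i j))
          + ∑' k, (a (k + m + 1) j z - a (k + m) j z
            - ∑ i, f i z * MvPolynomial.eval z (P (k + m) i j)) := by
      funext z
      rw [← Summable.sum_add_tsum_nat_add m (hsummable j z), htel m j z]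
    show DifferentiableAt ℂ (fun z : Fin n → ℂ => ∑' k, (a (k + 1) j z - a k j z
      - ∑ i, f i z * MvPolynomial.eval z (P k i j))) z₀
    rw [hdecomp]
    apply DifferentiableAt.add
    · apply DifferentiableAt.sub
      · obtain ⟨U, hUo, hUsub, hUdiff⟩ := haHol m hm1 j
        exact hUdiff.differentiableAt
          (hUo.mem_nhds (hUsub (hmem z₀ m m (fun i => (hmz i).le) le_rfl)))
      · exact (Differentiable.fun_sum fun k _ => hQdiff k j).differentiableAt
    · -- the tail
      set V : Set (Fin n → ℂ) := Set.univ.pi (fun _ => Metric.ball (0 : ℂ) (m : ℝ)) with hV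
      have hVopen : IsOpen V := isOpen_set_pi Set.finite_univ (fun i _ => Metric.isOpen_ball)
      have hVconv : Convex ℝ V := convex_pi (fun i _ => convex_ball _ _)
      have hVnorm : ∀ z ∈ V, ∀ i, ‖z i‖ < (m : ℝ) := by
        intro z hz i
        have := hz i (Set.mem_univ i)
        simpa [mem_ball, dist_eq_norm] using this
      have hVz₀ : z₀ ∈ V := by
        intro i _
        simpa [mem_ball, dist_eq_norm] using hmz i
      have hterm : ∀ k : ℕ, ∃ W : Set (Fin n → ℂ), IsOpen W ∧
          closedPolydiskR n (((k + m : ℕ) : ℝ) + 1) ⊆ W ∧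
          DifferentiableOn ℂ (fun z : Fin n → ℂ => a (k + m + 1) j z - a (k + m) j z
            - ∑ i, f i z * MvPolynomial.eval z (P (k + m) i j)) W := by
        intro k
        obtain ⟨U₁, hU₁o, hU₁s, hU₁d⟩ := haHol (k + m + 1) (by omega) j
        obtain ⟨U₂, hU₂o, hU₂s, hU₂d⟩ := haHol (k + m) (by omega) j
        refine ⟨U₁ ∩ U₂, hU₁o.inter hU₂o, fun z hz => ⟨?_, ?_⟩, ?_⟩
        · apply hU₁s
          intro i
          have := hz i
          have hc : ((k + m : ℕ) : ℝ) ≤ ((k + m + 1 : ℕ) : ℝ) := by push_cast; linarith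
          exact le_trans this (by linarith)
        · exact hU₂s hz
        · exact ((hU₁d.mono Set.inter_subset_left).sub
            (hU₂d.mono Set.inter_subset_right)).sub
            ((hQdiff (k + m) j).differentiableOn)
      choose W hWo hWs hWd using hterm
      have hVsubW : ∀ k, V ⊆ W k := by
        intro k z hz
        apply hWs k
        intro i
        have h1 : (m : ℝ) ≤ ((k + m : ℕ) : ℝ) + 1 := by push_cast; linarith
        exact le_trans (hVnorm z hz i).le h1
      have hgeo : Summable (fun k : ℕ => (2 : ℝ)⁻¹ ^ k) :=
        summable_geometric_of_lt_one (by norm_num) (by norm_num)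
      have hbound : Summable (fun k : ℕ => 2 * ((2 : ℝ)⁻¹ ^ (k + m))) := by
        refine ((hgeo.mul_right ((2 : ℝ)⁻¹ ^ m)).mul_left 2).congr fun k => ?_
        rw [pow_add]
      have hfd : ∀ (k : ℕ) (x : Fin n → ℂ), x ∈ V →
          HasFDerivAt (fun z : Fin n → ℂ => a (k + m + 1) j z - a (k + m) j z
            - ∑ i, f i z * MvPolynomial.eval z (P (k + m) i j))
          (fderiv ℂ (fun z : Fin n → ℂ => a (k + m + 1) j z - a (k + m) j z
            - ∑ i, f i z * MvPolynomial.eval z (P (k + m) i j)) x) x :=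
        fun k x hx => ((hWd k).differentiableAt
          ((hWo k).mem_nhds (hVsubW k hx))).hasFDerivAt
      have hfb : ∀ (k : ℕ) (x : Fin n → ℂ), x ∈ V →
          ‖fderiv ℂ (fun z : Fin n → ℂ => a (k + m + 1) j z - a (k + m) j z
            - ∑ i, f i z * MvPolynomial.eval z (P (k + m) i j)) x‖
            ≤ 2 * ((2 : ℝ)⁻¹ ^ (k + m)) := by
        intro k x hx
        apply fderiv_bound_of_polydisk (k := k + m) (m := m) (by omega)
          (hWo k) (hWs k) (hWd k)
        · intro z hz
          exact hu_small (k + m) (by omega) z hz j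
        · exact fun i => (hVnorm x hx i).le
      have hgeo' : Summable (fun k : ℕ => (2 : ℝ)⁻¹ ^ (k + m)) := by
        refine (hgeo.mul_right ((2 : ℝ)⁻¹ ^ m)).congr fun k => ?_
        rw [pow_add]
      have hsum0 : Summable (fun k : ℕ => a (k + m + 1) j z₀ - a (k + m) j z₀
          - ∑ i, f i z₀ * MvPolynomial.eval z₀ (P (k + m) i j)) := by
        apply Summable.of_norm_bounded_eventually_nat hgeo'
        apply Filter.Eventually.of_forall
        intro k
        exact (hu_small (k + m) (by omega) z₀
          (hmem z₀ m (k + m) (fun i => (hmz i).le) (by omega)) j).le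
      have happ := hasFDerivAt_tsum_of_isPreconnected hbound hVopen
        hVconv.isPreconnected hfd hfb hVz₀ hsum0 hVz₀
      exact happ.differentiableAt
  · -- the Bézout identity
    intro z
    obtain ⟨m₀, hm₀1, hm₀z⟩ := hradius z
    have hzero : ∀ k : ℕ,
        ∑ j, (∑ i, f i z * MvPolynomial.eval z (P k i j)) * f j z = 0 := by
      intro k
      have hexp : ∑ j, (∑ i, f i z * MvPolynomial.eval z (P k i j)) * f j z
          = ∑ j, ∑ i, f i z * MvPolynomial.eval z (P k i j) * f j z := by
        refine Finset.sum_congr rfl fun j _ => ?_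
        rw [Finset.sum_mul]
      rw [hexp]
      apply antisym_double_sum_zero (fun i j => f i z * MvPolynomial.eval z (P k i j) * f j z)
      intro i j
      have hPij : P k j i = -P k i j := by
        have := congrFun (congrFun (hPanti k) i) j
        simpa [Matrix.transpose_apply, Matrix.neg_apply] using this
      rw [hPij, map_neg]
      ring
    have hlim : Filter.Tendsto (fun M => ∑ j, (∑ k ∈ Finset.range M,
          (a (k + 1) j z - a k j z - ∑ i, f i z * MvPolynomial.eval z (P k i j))) * f j z)
        Filter.atTop (𝓝 (∑ j, (∑' k, (a (k + 1) j z - a k j z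
          - ∑ i, f i z * MvPolynomial.eval z (P k i j))) * f j z)) :=
      tendsto_finset_sum _ fun j _ => ((hsummable j z).hasSum.tendsto_sum_nat).mul_const _
    have heval : (fun M => ∑ j, (∑ k ∈ Finset.range M,
          (a (k + 1) j z - a k j z - ∑ i, f i z * MvPolynomial.eval z (P k i j))) * f j z)
        =ᶠ[Filter.atTop] (fun _ => (1 : ℂ)) := by
      filter_upwards [Filter.eventually_ge_atTop m₀] with M hM
      have hM1 : 1 ≤ M := hm₀1.trans hM
      have hzD : z ∈ closedPolydiskR n ((M : ℝ) + 1) :=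
        hmem z m₀ M (fun i => (hm₀z i).le) hM
      calc ∑ j, (∑ k ∈ Finset.range M, (a (k + 1) j z - a k j z
              - ∑ i, f i z * MvPolynomial.eval z (P k i j))) * f j z
          = ∑ j, (a M j z
              - ∑ k ∈ Finset.range M, ∑ i, f i z * MvPolynomial.eval z (P k i j)) * f j z := by
            refine Finset.sum_congr rfl fun j _ => ?_
            rw [htel M j z]
        _ = ∑ j, (a M j z * f j z - ∑ k ∈ Finset.range M,
              (∑ i, f i z * MvPolynomial.eval z (P k i j)) * f j z) := by
            refine Finset.sum_congr rfl fun j _ => ?_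
            rw [sub_mul, Finset.sum_mul]
        _ = ∑ j, a M j z * f j z - ∑ j, ∑ k ∈ Finset.range M,
              (∑ i, f i z * MvPolynomial.eval z (P k i j)) * f j z :=
            by rw [Finset.sum_sub_distrib]
        _ = ∑ j, a M j z * f j z - ∑ k ∈ Finset.range M,
              ∑ j, (∑ i, f i z * MvPolynomial.eval z (P k i j)) * f j z := by
            rw [Finset.sum_comm]
        _ = 1 - 0 := by
            rw [haBez M hM1 z hzD]
            congr 1
            exact Finset.sum_eq_zero fun k _ => hzero k
        _ = 1 := by ring
    exact tendsto_nhds_unique (hlim.congr' heval) tendsto_const_nhds
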